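/- arXiv:1207.5114 — 4 statements merged into one kernel-verified Lean document; each statement's English description precedes it below -/
import Mathlib

section
/- Let p₁, p₂, p₃, p₄ ∈ ℂ³ be nonzero null vectors (⟨pᵢ,pᵢ⟩ = 0) whose pairwise Hermitian pairings are nonzero (⟨pᵢ,pⱼ⟩ ≠ 0 for i ≠ j). Setting 𝕏₁ = 𝕏(p₁,p₂,p₃,p₄), 𝕏₂ = 𝕏(p₁,p₃,p₂,p₄), 𝕏₃ = 𝕏(p₂,p₃,p₁,p₄), one has 2|𝕏₁|²·Re(𝕏₃) = |𝕏₁|² + |𝕏₂|² − 2Re(𝕏₁ + 𝕏₂) + 1. -/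
/-- The Hermitian form of signature (2,1) on ℂ³:
`⟨z,w⟩ = z₁·conj(w₃) + z₂·conj(w₂) + z₃·conj(w₁)`. -/
noncomputable def herm (z w : Fin 3 → ℂ) : ℂ :=
  z 0 * starRingEnd ℂ (w 2) + z 1 * starRingEnd ℂ (w 1) + z 2 * starRingEnd ℂ (w 0)

/-- The Korányi–Reimann complex cross-ratio. -/
noncomputable def crossRatio (p₁ p₂ p₃ p₄ : Fin 3 → ℂ) : ℂ :=
  (herm p₃ p₁ * herm p₄ p₂) / (herm p₄ p₁ * herm p₃ p₂)

private lemma nzmul {x y : ℂ} (hx : x ≠ 0) (hy : y ≠ 0) : x * y ≠ 0 := mul_ne_zero hx hy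

private lemma herm_conj (z w : Fin 3 → ℂ) : starRingEnd ℂ (herm z w) = herm w z := by
  simp [herm, map_add, map_mul]; ring

private lemma herm_sum (g : Fin 4 → ℂ) (p : Fin 4 → Fin 3 → ℂ) (w : Fin 3 → ℂ) :
    herm (∑ i, g i • p i) w = ∑ i, g i * herm (p i) w := by
  simp only [herm, Finset.sum_apply, Pi.smul_apply, smul_eq_mul, Finset.sum_mul]
  rw [← Finset.sum_add_distrib, ← Finset.sum_add_distrib]
  exact Finset.sum_congr rfl fun i _ => by ring

private lemma det_fin_four (M : Matrix (Fin 4) (Fin 4) ℂ) :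
    M.det = M 0 0 * (M 1 1 * (M 2 2 * M 3 3 - M 2 3 * M 3 2) - M 1 2 * (M 2 1 * M 3 3 - M 2 3 * M 3 1) + M 1 3 * (M 2 1 * M 3 2 - M 2 2 * M 3 1))
      - M 0 1 * (M 1 0 * (M 2 2 * M 3 3 - M 2 3 * M 3 2) - M 1 2 * (M 2 0 * M 3 3 - M 2 3 * M 3 0) + M 1 3 * (M 2 0 * M 3 2 - M 2 2 * M 3 0))
      + M 0 2 * (M 1 0 * (M 2 1 * M 3 3 - M 2 3 * M 3 1) - M 1 1 * (M 2 0 * M 3 3 - M 2 3 * M 3 0) + M 1 3 * (M 2 0 * M 3 1 - M 2 1 * M 3 0))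
      - M 0 3 * (M 1 0 * (M 2 1 * M 3 2 - M 2 2 * M 3 1) - M 1 1 * (M 2 0 * M 3 2 - M 2 2 * M 3 0) + M 1 2 * (M 2 0 * M 3 1 - M 2 1 * M 3 0)) := by
  simp [Matrix.det_succ_row_zero, Fin.sum_univ_succ, show (Fin.succ 2 : Fin 4) = 3 from rfl,
    show Fin.succAbove (2:Fin 4) 2 = 3 from rfl, show Fin.succAbove (1:Fin 4) 2 = 3 from rfl,
    show Fin.castSucc (2:Fin 3) = (2:Fin 4) from rfl, show Fin.succAbove (3:Fin 4) 2 = 2 from rfl]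
  ring

private lemma scalar_key (a a1 b b1 c c1 d d1 e e1 f f1 : ℂ)
    (hb : b ≠ 0) (hb1 : b1 ≠ 0) (hc : c ≠ 0) (hc1 : c1 ≠ 0)
    (hd : d ≠ 0) (hd1 : d1 ≠ 0) (he : e ≠ 0) (he1 : e1 ≠ 0)
    (hF : a*a1*f*f1 + b*b1*e*e1 + c*c1*d*d1 - (b*e*c1*d1 + b1*e1*c*d)
      - (a*f*c1*d + a1*f1*c*d1) - (a1*b*e1*f + a*b1*e*f1) = 0) :
    (b1*e1*b*e*a*f1)/(c1*d1*c*d*e1*b) + (b1*e1*b*e*a1*f)/(c1*d1*c*d*e*b1)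
      = (b1*e1*b*e)/(c1*d1*c*d) + (a1*f1*a*f)/(c1*d*c*d1)
        - b1*e1/(c1*d1) - b*e/(c*d) - a1*f1/(c1*d) - a*f/(c*d1) + 1 := by
  have hD : (b*b1*c*c1*d*d1*e*e1 : ℂ) ≠ 0 :=
    nzmul (nzmul (nzmul (nzmul (nzmul (nzmul (nzmul hb hb1) hc) hc1) hd) hd1) he) he1
  have t1 : (b1*e1*b*e*a*f1)/(c1*d1*c*d*e1*b)
      = (b1*e1*b*e*a*f1*(b1*e))/(b*b1*c*c1*d*d1*e*e1) := by
    rw [div_eq_div_iff (nzmul (nzmul (nzmul (nzmul (nzmul hc1 hd1) hc) hd) he1) hb) hD]; ring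
  have t2 : (b1*e1*b*e*a1*f)/(c1*d1*c*d*e*b1)
      = (b1*e1*b*e*a1*f*(b*e1))/(b*b1*c*c1*d*d1*e*e1) := by
    rw [div_eq_div_iff (nzmul (nzmul (nzmul (nzmul (nzmul hc1 hd1) hc) hd) he) hb1) hD]; ring
  have t3 : (b1*e1*b*e)/(c1*d1*c*d)
      = (b1*e1*b*e*(b*b1*e*e1))/(b*b1*c*c1*d*d1*e*e1) := by
    rw [div_eq_div_iff (nzmul (nzmul (nzmul hc1 hd1) hc) hd) hD]; ring
  have t4 : (a1*f1*a*f)/(c1*d*c*d1)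
      = (a1*f1*a*f*(b*b1*e*e1))/(b*b1*c*c1*d*d1*e*e1) := by
    rw [div_eq_div_iff (nzmul (nzmul (nzmul hc1 hd) hc) hd1) hD]; ring
  have t5 : b1*e1/(c1*d1) = (b1*e1*(b*b1*c*d*e*e1))/(b*b1*c*c1*d*d1*e*e1) := by
    rw [div_eq_div_iff (nzmul hc1 hd1) hD]; ring
  have t6 : b*e/(c*d) = (b*e*(b*b1*c1*d1*e*e1))/(b*b1*c*c1*d*d1*e*e1) := by
    rw [div_eq_div_iff (nzmul hc hd) hD]; ring
  have t7 : a1*f1/(c1*d) = (a1*f1*(b*b1*c*d1*e*e1))/(b*b1*c*c1*d*d1*e*e1) := by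
    rw [div_eq_div_iff (nzmul hc1 hd) hD]; ring
  have t8 : a*f/(c*d1) = (a*f*(b*b1*c1*d*e*e1))/(b*b1*c*c1*d*d1*e*e1) := by
    rw [div_eq_div_iff (nzmul hc hd1) hD]; ring
  have t9 : (1:ℂ) = (b*b1*c*c1*d*d1*e*e1)/(b*b1*c*c1*d*d1*e*e1) := (div_self hD).symm
  rw [t1, t2, t3, t4, t5, t6, t7, t8, t9]
  simp only [← add_div, div_sub_div_same]
  rw [div_eq_div_iff hD hD]
  linear_combination (-(b*b1*e*e1)*(b*b1*c*c1*d*d1*e*e1)) * hF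

private lemma cast_abs_sq (z : ℂ) : (‖z‖ : ℂ)^2 = z * starRingEnd ℂ z := by
  rw [← Complex.ofReal_pow, Complex.sq_norm, Complex.mul_conj]

private lemma cast_re (z : ℂ) : ((z.re : ℝ) : ℂ) = (z + starRingEnd ℂ z)/2 := by
  rw [Complex.add_conj]; push_cast; ring

theorem crossRatio_relation_two
    (p : Fin 4 → Fin 3 → ℂ)
    (hne : ∀ i, p i ≠ 0)
    (hnull : ∀ i, herm (p i) (p i) = 0)
    (hpair : ∀ i j, i ≠ j → herm (p i) (p j) ≠ 0) :
    2 * ‖crossRatio (p 0) (p 1) (p 2) (p 3)‖ ^ 2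
        * (crossRatio (p 1) (p 2) (p 0) (p 3)).re
      = ‖crossRatio (p 0) (p 1) (p 2) (p 3)‖ ^ 2
        + ‖crossRatio (p 0) (p 2) (p 1) (p 3)‖ ^ 2
        - 2 * (crossRatio (p 0) (p 1) (p 2) (p 3)
            + crossRatio (p 0) (p 2) (p 1) (p 3)).re + 1 := by
  -- linear dependence of four vectors in ℂ³
  have hdep : ¬ LinearIndependent ℂ p := by
    intro h
    have h1 := h.fintype_card_le_finrank
    rw [Module.finrank_fintype_fun_eq_card] at h1
    simp at h1
  obtain ⟨g, hsum, i0, hg0⟩ := Fintype.not_linearIndependent_iff.mp hdep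
  set M : Matrix (Fin 4) (Fin 4) ℂ := Matrix.of fun i j => herm (p i) (p j) with hM
  have hker : Matrix.vecMul g M = 0 := by
    funext j
    rw [Matrix.vecMul, dotProduct]
    have : ∑ i, g i * herm (p i) (p j) = 0 := by
      rw [← herm_sum, hsum]; simp [herm]
    simpa [hM] using this
  have hdet : M.det = 0 := Matrix.exists_vecMul_eq_zero_iff.mp
    ⟨g, fun h => hg0 (by rw [h]; rfl), hker⟩
  -- abbreviations
  have e10 : herm (p 1) (p 0) = starRingEnd ℂ (herm (p 0) (p 1)) := (herm_conj _ _).symm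
  have e20 : herm (p 2) (p 0) = starRingEnd ℂ (herm (p 0) (p 2)) := (herm_conj _ _).symm
  have e30 : herm (p 3) (p 0) = starRingEnd ℂ (herm (p 0) (p 3)) := (herm_conj _ _).symm
  have e21 : herm (p 2) (p 1) = starRingEnd ℂ (herm (p 1) (p 2)) := (herm_conj _ _).symm
  have e31 : herm (p 3) (p 1) = starRingEnd ℂ (herm (p 1) (p 3)) := (herm_conj _ _).symm
  have e32 : herm (p 3) (p 2) = starRingEnd ℂ (herm (p 2) (p 3)) := (herm_conj _ _).symm
  -- the Gram determinant relation
  have hF : herm (p 0) (p 1) * starRingEnd ℂ (herm (p 0) (p 1)) * herm (p 2) (p 3) * starRingEnd ℂ (herm (p 2) (p 3))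
      + herm (p 0) (p 2) * starRingEnd ℂ (herm (p 0) (p 2)) * herm (p 1) (p 3) * starRingEnd ℂ (herm (p 1) (p 3))
      + herm (p 0) (p 3) * starRingEnd ℂ (herm (p 0) (p 3)) * herm (p 1) (p 2) * starRingEnd ℂ (herm (p 1) (p 2))
      - (herm (p 0) (p 2) * herm (p 1) (p 3) * starRingEnd ℂ (herm (p 0) (p 3)) * starRingEnd ℂ (herm (p 1) (p 2))
        + starRingEnd ℂ (herm (p 0) (p 2)) * starRingEnd ℂ (herm (p 1) (p 3)) * herm (p 0) (p 3) * herm (p 1) (p 2))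
      - (herm (p 0) (p 1) * herm (p 2) (p 3) * starRingEnd ℂ (herm (p 0) (p 3)) * herm (p 1) (p 2)
        + starRingEnd ℂ (herm (p 0) (p 1)) * starRingEnd ℂ (herm (p 2) (p 3)) * herm (p 0) (p 3) * starRingEnd ℂ (herm (p 1) (p 2)))
      - (starRingEnd ℂ (herm (p 0) (p 1)) * herm (p 0) (p 2) * starRingEnd ℂ (herm (p 1) (p 3)) * herm (p 2) (p 3)
        + herm (p 0) (p 1) * starRingEnd ℂ (herm (p 0) (p 2)) * herm (p 1) (p 3) * starRingEnd ℂ (herm (p 2) (p 3))) = 0 := by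
    have h4 := det_fin_four M
    rw [hdet] at h4
    simp only [hM, Matrix.of_apply, hnull, e10, e20, e30, e21, e31, e32] at h4
    linear_combination -h4
  -- nonvanishing pairings
  have ha : herm (p 0) (p 1) ≠ 0 := hpair 0 1 (by decide)
  have hb : herm (p 0) (p 2) ≠ 0 := hpair 0 2 (by decide)
  have hc : herm (p 0) (p 3) ≠ 0 := hpair 0 3 (by decide)
  have hd : herm (p 1) (p 2) ≠ 0 := hpair 1 2 (by decide)
  have he : herm (p 1) (p 3) ≠ 0 := hpair 1 3 (by decide)
  have hf : herm (p 2) (p 3) ≠ 0 := hpair 2 3 (by decide)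
  have ha1 : starRingEnd ℂ (herm (p 0) (p 1)) ≠ 0 := by simpa using ha
  have hb1 : starRingEnd ℂ (herm (p 0) (p 2)) ≠ 0 := by simpa using hb
  have hc1 : starRingEnd ℂ (herm (p 0) (p 3)) ≠ 0 := by simpa using hc
  have hd1 : starRingEnd ℂ (herm (p 1) (p 2)) ≠ 0 := by simpa using hd
  have he1 : starRingEnd ℂ (herm (p 1) (p 3)) ≠ 0 := by simpa using he
  have hf1 : starRingEnd ℂ (herm (p 2) (p 3)) ≠ 0 := by simpa using hf
  have key := scalar_key (herm (p 0) (p 1)) (starRingEnd ℂ (herm (p 0) (p 1)))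
    (herm (p 0) (p 2)) (starRingEnd ℂ (herm (p 0) (p 2)))
    (herm (p 0) (p 3)) (starRingEnd ℂ (herm (p 0) (p 3)))
    (herm (p 1) (p 2)) (starRingEnd ℂ (herm (p 1) (p 2)))
    (herm (p 1) (p 3)) (starRingEnd ℂ (herm (p 1) (p 3)))
    (herm (p 2) (p 3)) (starRingEnd ℂ (herm (p 2) (p 3)))
    hb hb1 hc hc1 hd hd1 he he1 hF
  rw [← Complex.ofReal_inj]
  simp only [Complex.ofReal_mul, Complex.ofReal_add, Complex.ofReal_sub, Complex.ofReal_pow,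
    Complex.ofReal_one, Complex.ofReal_ofNat]
  simp only [cast_abs_sq, cast_re]
  simp only [crossRatio, e10, e20, e30, e21, e31, e32]
  simp only [map_add, map_div₀, map_mul, Complex.conj_conj]
  linear_combination key
end

section
/- Let x₁, x₂, x₃ ∈ ℂ be a point of the cross-ratio variety, i.e. |x₂| = |x₁|·|x₃| and 2|x₁|²·Re(x₃) = |x₁|² + |x₂|² − 2Re(x₁ + x₂) + 1. Then |x₁|^{1/2} + |x₂|^{1/2} ≥ 1 and −1 ≤ |x₁|^{1/2} − |x₂|^{1/2} ≤ 1. -/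
set_option maxHeartbeats 1000000


theorem ptolemaean_inequality_cross_ratio_variety
    (x₁ x₂ x₃ : ℂ)
    (h1 : ‖x₂‖ = ‖x₁‖ * ‖x₃‖)
    (h2 : 2 * ‖x₁‖ ^ 2 * x₃.re
      = ‖x₁‖ ^ 2 + ‖x₂‖ ^ 2 - 2 * (x₁ + x₂).re + 1) :
    1 ≤ Real.sqrt (‖x₁‖) + Real.sqrt (‖x₂‖)
    ∧ -1 ≤ Real.sqrt (‖x₁‖) - Real.sqrt (‖x₂‖)
    ∧ Real.sqrt (‖x₁‖) - Real.sqrt (‖x₂‖) ≤ 1 := by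
  set a := ‖x₁‖ with ha
  set b := ‖x₂‖ with hb
  have ha0 : 0 ≤ a := norm_nonneg x₁
  have hb0 : 0 ≤ b := norm_nonneg x₂
  have hc0 : 0 ≤ ‖x₃‖ := norm_nonneg x₃
  have hr1 : x₁.re ≤ a := Complex.re_le_norm x₁
  have hr2 : x₂.re ≤ b := Complex.re_le_norm x₂
  have hr3 : x₃.re ≤ ‖x₃‖ := Complex.re_le_norm x₃
  simp only [Complex.add_re] at h2
  have key : a ^ 2 + b ^ 2 + 1 - 2 * a - 2 * b ≤ 2 * a * b := by
    nlinarith [sq_nonneg a, mul_nonneg ha0 ha0, mul_le_mul_of_nonneg_left hr3 (by positivity : (0:ℝ) ≤ 2 * a ^ 2)]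
  set s := Real.sqrt a with hs
  set t := Real.sqrt b with ht
  have hs0 : 0 ≤ s := Real.sqrt_nonneg a
  have ht0 : 0 ≤ t := Real.sqrt_nonneg b
  have hs2 : s ^ 2 = a := Real.sq_sqrt ha0
  have ht2 : t ^ 2 = b := Real.sq_sqrt hb0
  refine ⟨?_, ?_, ?_⟩
  · nlinarith [sq_nonneg (s - t), sq_nonneg (s + t), sq_nonneg (s + t - 1),
      sq_nonneg (s + t + 1), mul_nonneg hs0 ht0, sq_nonneg (s*t), key,
      mul_nonneg (mul_nonneg hs0 ht0) (add_nonneg hs0 ht0)]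
  all_goals
    have key2 : (s - t) ^ 2 ≤ 1 := by
      by_contra hq
      push_neg at hq
      nlinarith [key, mul_nonneg hs0 ht0, sq_nonneg (s + t), sq_nonneg (s - t)]
  · nlinarith [key2]
  · nlinarith [key2]
end

section
/- Let x₁, x₂, x₃ ∈ ℂ be a point of the cross-ratio variety, i.e. |x₂| = |x₁|·|x₃| and 2|x₁|²·Re(x₃) = |x₁|² + |x₂|² − 2Re(x₁ + x₂) + 1. Then the product ((|x₁|^{1/2} − |x₂|^{1/2})² − 1)·((|x₁|^{1/2} + |x₂|^{1/2})² − 1) is ≤ 0. -/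
theorem cross_ratio_variety_product_nonpos
    (x₁ x₂ x₃ : ℂ)
    (h1 : ‖x₂‖ = ‖x₁‖ * ‖x₃‖)
    (h2 : 2 * ‖x₁‖ ^ 2 * x₃.re
      = ‖x₁‖ ^ 2 + ‖x₂‖ ^ 2 - 2 * (x₁ + x₂).re + 1) :
    ((Real.sqrt (‖x₁‖) - Real.sqrt (‖x₂‖)) ^ 2 - 1)
      * ((Real.sqrt (‖x₁‖) + Real.sqrt (‖x₂‖)) ^ 2 - 1) ≤ 0 := by
  have hr : (Real.sqrt (‖x₁‖)) ^ 2 = ‖x₁‖ :=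
    Real.sq_sqrt (norm_nonneg _)
  have hs : (Real.sqrt (‖x₂‖)) ^ 2 = ‖x₂‖ :=
    Real.sq_sqrt (norm_nonneg _)
  have h1r : x₁.re ≤ ‖x₁‖ := Complex.re_le_norm x₁
  have h2r : x₂.re ≤ ‖x₂‖ := Complex.re_le_norm x₂
  have h3r : -‖x₃‖ ≤ x₃.re := by
    have := Complex.abs_re_le_norm x₃
    have := neg_abs_le x₃.re
    linarith
  have hre : (x₁ + x₂).re = x₁.re + x₂.re := Complex.add_re x₁ x₂
  have hn1 : 0 ≤ ‖x₁‖ := norm_nonneg _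
  have hn2 : 0 ≤ ‖x₂‖ := norm_nonneg _
  have hb : ‖x₁‖ ^ 2 * x₃.re ≤ ‖x₁‖ * ‖x₂‖ := by
    have h := mul_le_mul_of_nonneg_left (Complex.re_le_norm x₃) (sq_nonneg (‖x₁‖))
    nlinarith [h1]
  have key : ‖x₁‖ ^ 2 + ‖x₂‖ ^ 2 + 1
      ≤ 2 * (‖x₁‖ + ‖x₂‖)
        + 2 * (‖x₁‖ * ‖x₂‖) := by
    rw [hre] at h2
    linarith
  nlinarith [key, sq_nonneg (Real.sqrt (‖x₁‖) * Real.sqrt (‖x₂‖)),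
    Real.sqrt_nonneg (‖x₁‖), Real.sqrt_nonneg (‖x₂‖)]
end

section
/- (Ptolemaean inequality in the Heisenberg group, first form) For any four points p₁, p₂, p₃, p₄ of the Heisenberg group ℂ × ℝ, the Korányi–Cygan metric satisfies d_K(p₂,p₃)·d_K(p₁,p₄) ≤ d_K(p₂,p₄)·d_K(p₁,p₃) + d_K(p₁,p₂)·d_K(p₃,p₄). -/
/-- The Korányi–Cygan metric on the Heisenberg group ℂ × ℝ. -/
noncomputable def dK (p q : ℂ × ℝ) : ℝ :=
  Real.sqrt ‖
    ((‖p.1 - q.1‖ : ℂ) ^ 2 - Complex.I * (p.2 : ℂ) + Complex.I * (q.2 : ℂ)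
      - 2 * Complex.I * ((p.1 * starRingEnd ℂ q.1).im : ℂ))‖

open Complex

noncomputable def AK (p q : ℂ × ℝ) : ℂ :=
  (p.1 - q.1) * (starRingEnd ℂ p.1 - starRingEnd ℂ q.1) - Complex.I * (p.2 : ℂ)
    + Complex.I * (q.2 : ℂ) - (p.1 * starRingEnd ℂ q.1 - starRingEnd ℂ p.1 * q.1)

lemma dK_eq' (p q : ℂ × ℝ) : Real.sqrt ‖
    ((‖p.1 - q.1‖ : ℂ) ^ 2 - Complex.I * (p.2 : ℂ) + Complex.I * (q.2 : ℂ)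
      - 2 * Complex.I * ((p.1 * starRingEnd ℂ q.1).im : ℂ))‖
    = Real.sqrt (‖AK p q‖) := by
  unfold AK
  congr 2
  have h1 : ((‖p.1 - q.1‖ : ℝ) : ℂ) ^ 2 = (p.1 - q.1) * starRingEnd ℂ (p.1 - q.1) := by
    rw [Complex.mul_conj]
    norm_cast
    rw [Complex.sq_norm]
  have h2 : 2 * Complex.I * (((p.1 * starRingEnd ℂ q.1).im : ℝ) : ℂ)
      = p.1 * starRingEnd ℂ q.1 - starRingEnd ℂ p.1 * q.1 := by
    have h := Complex.sub_conj (p.1 * starRingEnd ℂ q.1)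
    rw [map_mul, Complex.conj_conj] at h
    rw [h]
    push_cast
    ring
  rw [h1, h2]
  simp only [map_sub]
  try ring

lemma AK_conj (p q : ℂ × ℝ) : AK q p = starRingEnd ℂ (AK p q) := by
  unfold AK
  simp only [map_sub, map_add, map_mul, map_sub, Complex.conj_conj, Complex.conj_I,
    Complex.conj_ofReal]
  ring

lemma abs_AK_symm (p q : ℂ × ℝ) : ‖AK q p‖ = ‖AK p q‖ := by
  rw [AK_conj, Complex.norm_conj]

lemma re_AK (p q : ℂ × ℝ) : (AK p q).re = Complex.normSq (p.1 - q.1) := by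
  unfold AK
  have h1 : (p.1 - q.1) * (starRingEnd ℂ p.1 - starRingEnd ℂ q.1)
      = (Complex.normSq (p.1 - q.1) : ℂ) := by
    rw [← Complex.mul_conj]; simp [map_sub]
  rw [h1]
  have h2 : p.1 * starRingEnd ℂ q.1 - starRingEnd ℂ p.1 * q.1
      = (2 * (p.1 * starRingEnd ℂ q.1).im : ℝ) * Complex.I := by
    have h := Complex.sub_conj (p.1 * starRingEnd ℂ q.1)
    rw [map_mul, Complex.conj_conj] at h
    exact h
  rw [h2]
  simp

lemma abs_sub_sq_le (p q : ℂ × ℝ) :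
    ‖p.1 - q.1‖ ^ 2 ≤ ‖AK p q‖ := by
  rw [Complex.sq_norm, ← re_AK]
  exact Complex.re_le_norm _

lemma AK_triangle_id (a c b : ℂ × ℝ) :
    AK a b = AK a c + AK c b + 2 * (a.1 - c.1) * (starRingEnd ℂ c.1 - starRingEnd ℂ b.1) := by
  unfold AK; ring

lemma sqrt_abs_AK_triangle (a c b : ℂ × ℝ) :
    Real.sqrt (‖AK a b‖) ≤
      Real.sqrt (‖AK a c‖) + Real.sqrt (‖AK c b‖) := by
  set x := Real.sqrt (‖AK a c‖) with hx
  set y := Real.sqrt (‖AK c b‖) with hy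
  have hx0 : 0 ≤ x := Real.sqrt_nonneg _
  have hy0 : 0 ≤ y := Real.sqrt_nonneg _
  have hxsq : x ^ 2 = ‖AK a c‖ := Real.sq_sqrt (norm_nonneg _)
  have hysq : y ^ 2 = ‖AK c b‖ := Real.sq_sqrt (norm_nonneg _)
  have key : ‖AK a b‖ ≤ (x + y) ^ 2 := by
    rw [AK_triangle_id a c b]
    have h1 : ‖AK a c + AK c b + 2 * (a.1 - c.1) * (starRingEnd ℂ c.1 - starRingEnd ℂ b.1)‖
        ≤ ‖AK a c‖ + ‖AK c b‖
          + 2 * ‖a.1 - c.1‖ * ‖c.1 - b.1‖ := by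
      refine le_trans (norm_add_le _ _) ?_
      gcongr
      · exact norm_add_le _ _
      · rw [norm_mul, norm_mul]
        have : ‖starRingEnd ℂ c.1 - starRingEnd ℂ b.1‖ = ‖c.1 - b.1‖ := by
          rw [← map_sub, Complex.norm_conj]
        rw [this]
        simp
    refine le_trans h1 ?_
    have h2 : ‖a.1 - c.1‖ ≤ x := by
      rw [hx]
      exact (Real.le_sqrt (norm_nonneg _) (norm_nonneg _)).mpr (abs_sub_sq_le a c)
    have h3 : ‖c.1 - b.1‖ ≤ y := by
      rw [hy]
      exact (Real.le_sqrt (norm_nonneg _) (norm_nonneg _)).mpr (abs_sub_sq_le c b)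
    nlinarith [norm_nonneg (a.1 - c.1), norm_nonneg (c.1 - b.1)]
  calc Real.sqrt (‖AK a b‖) ≤ Real.sqrt ((x + y) ^ 2) := Real.sqrt_le_sqrt key
    _ = x + y := by rw [Real.sqrt_sq (by positivity)]

noncomputable def NK (p : ℂ × ℝ) : ℂ := p.1 * starRingEnd ℂ p.1 + Complex.I * (p.2 : ℂ)

lemma AK_zero (p : ℂ × ℝ) : AK ((0 : ℂ), (0 : ℝ)) p = NK p := by
  unfold AK NK
  simp

def TH (g p : ℂ × ℝ) : ℂ × ℝ := (g.1 + p.1, g.2 + p.2 + 2 * (g.1 * starRingEnd ℂ p.1).im)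

lemma AK_translate (g p q : ℂ × ℝ) : AK (TH g p) (TH g q) = AK p q := by
  have hwp : 2 * (((g.1 * starRingEnd ℂ p.1).im : ℝ) : ℂ) * Complex.I
      = g.1 * starRingEnd ℂ p.1 - starRingEnd ℂ g.1 * p.1 := by
    have h := Complex.sub_conj (g.1 * starRingEnd ℂ p.1)
    rw [map_mul, Complex.conj_conj] at h
    rw [h]; push_cast; ring
  have hwq : 2 * (((g.1 * starRingEnd ℂ q.1).im : ℝ) : ℂ) * Complex.I
      = g.1 * starRingEnd ℂ q.1 - starRingEnd ℂ g.1 * q.1 := by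
    have h := Complex.sub_conj (g.1 * starRingEnd ℂ q.1)
    rw [map_mul, Complex.conj_conj] at h
    rw [h]; push_cast; ring
  unfold AK TH
  simp only [map_add]
  push_cast
  linear_combination hwq - hwp

set_option maxHeartbeats 1600000 in
lemma key_inv_identity (zp wp sp zq wq sq Np Bp Nq Bq : ℂ)
    (eNp : zp * wp + sp = Np) (eBp : zp * wp - sp = Bp)
    (eNq : zq * wq + sq = Nq) (eBq : zq * wq - sq = Bq)
    (hp : Np ≠ 0) (hp' : Bp ≠ 0) (hq : Nq ≠ 0) (hq' : Bq ≠ 0) :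
    (-zp / Bp - -zq / Bq) * (-wp / Np - -wq / Nq)
      + sp / (Np * Bp) - sq / (Nq * Bq)
      - ((-zp / Bp) * (-wq / Nq) - (-wp / Np) * (-zq / Bq))
      = ((zp - zq) * (wp - wq) - sp + sq - (zp * wq - wp * zq)) / (Bp * Nq) := by
  have hD : Np * Bp * Nq * Bq ≠ 0 := by
    exact mul_ne_zero (mul_ne_zero (mul_ne_zero hp hp') hq) hq'
  set E := (-zp / Bp - -zq / Bq) * (-wp / Np - -wq / Nq)
      + sp / (Np * Bp) - sq / (Nq * Bq)
      - ((-zp / Bp) * (-wq / Nq) - (-wp / Np) * (-zq / Bq)) with hE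
  set Apq := (zp - zq) * (wp - wq) - sp + sq - (zp * wq - wp * zq) with hA
  have h1 : E * (Np * Bp * Nq * Bq) = Apq * (Np * Bq) := by
    rw [hE, hA]
    field_simp
    rw [← eNp, ← eBp, ← eNq, ← eBq]
    ring
  calc E = E * (Np * Bp * Nq * Bq) / (Np * Bp * Nq * Bq) :=
        (mul_div_cancel_right₀ E hD).symm
    _ = Apq * (Np * Bq) / (Np * Bp * Nq * Bq) := by rw [h1]
    _ = Apq / (Bp * Nq) := by
        rw [div_eq_div_iff hD (mul_ne_zero hp' hq)]
        ring

noncomputable def iH (p : ℂ × ℝ) : ℂ × ℝ :=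
  (-p.1 / starRingEnd ℂ (NK p), -p.2 / Complex.normSq (NK p))

lemma NK_eq_zero {q : ℂ × ℝ} (h : NK q = 0) : q = ((0 : ℂ), (0 : ℝ)) := by
  unfold NK at h
  have hre := congrArg Complex.re h
  have him := congrArg Complex.im h
  rw [Complex.mul_conj] at hre him
  simp at hre him
  have h1 : q.1 = 0 := by
    have := Complex.normSq_eq_zero.mp (by simpa using hre)
    exact this
  exact Prod.ext h1 (by simpa using him)

set_option maxHeartbeats 1600000 in
lemma AK_inv (p q : ℂ × ℝ) (hp : NK p ≠ 0) (hq : NK q ≠ 0) :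
    AK (iH p) (iH q) = AK p q / (starRingEnd ℂ (NK p) * NK q) := by
  have hp' : starRingEnd ℂ (NK p) ≠ 0 := by simpa using hp
  have hq' : starRingEnd ℂ (NK q) ≠ 0 := by simpa using hq
  have hnp : ((Complex.normSq (NK p) : ℝ) : ℂ) = NK p * starRingEnd ℂ (NK p) :=
    (Complex.mul_conj _).symm
  have hnq : ((Complex.normSq (NK q) : ℝ) : ℂ) = NK q * starRingEnd ℂ (NK q) :=
    (Complex.mul_conj _).symm
  have hNp : NK p = p.1 * starRingEnd ℂ p.1 + Complex.I * (p.2 : ℂ) := rfl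
  have hNq : NK q = q.1 * starRingEnd ℂ q.1 + Complex.I * (q.2 : ℂ) := rfl
  have hNp' : starRingEnd ℂ (NK p) = p.1 * starRingEnd ℂ p.1 - Complex.I * (p.2 : ℂ) := by
    rw [hNp]
    simp only [map_add, map_mul, Complex.conj_conj, Complex.conj_I, Complex.conj_ofReal]
    ring
  have hNq' : starRingEnd ℂ (NK q) = q.1 * starRingEnd ℂ q.1 - Complex.I * (q.2 : ℂ) := by
    rw [hNq]
    simp only [map_add, map_mul, Complex.conj_conj, Complex.conj_I, Complex.conj_ofReal]
    ring
  have key := key_inv_identity p.1 (starRingEnd ℂ p.1) (Complex.I * (p.2 : ℂ))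
    q.1 (starRingEnd ℂ q.1) (Complex.I * (q.2 : ℂ))
    (NK p) (starRingEnd ℂ (NK p)) (NK q) (starRingEnd ℂ (NK q))
    hNp.symm hNp'.symm hNq.symm hNq'.symm hp hp' hq hq'
  unfold AK iH
  simp only [map_div₀, map_neg, Complex.conj_conj]
  push_cast
  rw [hnp, hnq]
  linear_combination key

lemma dK_symm' (p q : ℂ × ℝ) :
    Real.sqrt (‖AK q p‖) = Real.sqrt (‖AK p q‖) := by
  rw [abs_AK_symm]

lemma abs_AK_inv (p q : ℂ × ℝ) (hp : NK p ≠ 0) (hq : NK q ≠ 0) :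
    ‖AK (iH p) (iH q)‖
      = ‖AK p q‖ / (‖NK p‖ * ‖NK q‖) := by
  rw [AK_inv p q hp hq, norm_div, norm_mul, Complex.norm_conj]

lemma ptolemy_origin (a b c : ℂ × ℝ) :
    Real.sqrt (‖AK a b‖) * Real.sqrt (‖AK ((0:ℂ),(0:ℝ)) c‖)
      ≤ Real.sqrt (‖AK a c‖) * Real.sqrt (‖AK ((0:ℂ),(0:ℝ)) b‖)
        + Real.sqrt (‖AK ((0:ℂ),(0:ℝ)) a‖) * Real.sqrt (‖AK b c‖) := by
  have hOO : ‖AK ((0:ℂ),(0:ℝ)) ((0:ℂ),(0:ℝ))‖ = 0 := by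
    rw [AK_zero]
    simp [NK]
  by_cases ha : NK a = 0
  · rw [NK_eq_zero ha, hOO]
    simp [mul_comm]
  by_cases hb : NK b = 0
  · rw [NK_eq_zero hb]
    rw [dK_symm' a ((0:ℂ),(0:ℝ))]
    rw [hOO]
    simp [mul_comm]
  by_cases hc : NK c = 0
  · rw [NK_eq_zero hc, hOO]
    simp
    positivity
  · have tri := sqrt_abs_AK_triangle (iH a) (iH c) (iH b)
    rw [abs_AK_inv a b ha hb, abs_AK_inv a c ha hc, abs_AK_inv c b hc hb] at tri
    set na := ‖NK a‖ with hna
    set nb := ‖NK b‖ with hnb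
    set nc := ‖NK c‖ with hnc
    set xab := ‖AK a b‖ with hxab
    set xac := ‖AK a c‖ with hxac
    set xcb := ‖AK c b‖ with hxcb
    have hna0 : 0 < na := norm_pos_iff.mpr ha
    have hnb0 : 0 < nb := norm_pos_iff.mpr hb
    have hnc0 : 0 < nc := norm_pos_iff.mpr hc
    have hxab0 : 0 ≤ xab := norm_nonneg _
    have hxac0 : 0 ≤ xac := norm_nonneg _
    have hxcb0 : 0 ≤ xcb := norm_nonneg _
    have hOa : ‖AK ((0:ℂ),(0:ℝ)) a‖ = na := by rw [AK_zero]
    have hOb : ‖AK ((0:ℂ),(0:ℝ)) b‖ = nb := by rw [AK_zero]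
    have hOc : ‖AK ((0:ℂ),(0:ℝ)) c‖ = nc := by rw [AK_zero]
    have hbc : ‖AK b c‖ = xcb := abs_AK_symm c b ▸ rfl
    rw [hOa, hOb, hOc, hbc]
    have e1 : Real.sqrt (xab / (na * nb)) * Real.sqrt (na * nb * nc)
        = Real.sqrt xab * Real.sqrt nc := by
      rw [← Real.sqrt_mul (by positivity), ← Real.sqrt_mul hxab0]
      congr 1
      field_simp
    have e2 : Real.sqrt (xac / (na * nc)) * Real.sqrt (na * nb * nc)
        = Real.sqrt xac * Real.sqrt nb := by
      rw [← Real.sqrt_mul (by positivity), ← Real.sqrt_mul hxac0]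
      congr 1
      field_simp
    have e3 : Real.sqrt (xcb / (nc * nb)) * Real.sqrt (na * nb * nc)
        = Real.sqrt na * Real.sqrt xcb := by
      rw [← Real.sqrt_mul (by positivity), ← Real.sqrt_mul (le_of_lt hna0)]
      congr 1
      field_simp
    calc Real.sqrt xab * Real.sqrt nc
        = Real.sqrt (xab / (na * nb)) * Real.sqrt (na * nb * nc) := e1.symm
      _ ≤ (Real.sqrt (xac / (na * nc)) + Real.sqrt (xcb / (nc * nb)))
            * Real.sqrt (na * nb * nc) :=
          mul_le_mul_of_nonneg_right tri (Real.sqrt_nonneg _)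
      _ = Real.sqrt xac * Real.sqrt nb + Real.sqrt na * Real.sqrt xcb := by
          rw [add_mul, e2, e3]

lemma dK_eq (p q : ℂ × ℝ) : dK p q = Real.sqrt (‖AK p q‖) := by
  unfold dK
  exact dK_eq' p q

theorem ptolemaean_inequality_heisenberg_first (p₁ p₂ p₃ p₄ : ℂ × ℝ) :
    dK p₂ p₃ * dK p₁ p₄ ≤ dK p₂ p₄ * dK p₁ p₃ + dK p₁ p₂ * dK p₃ p₄ := by
  have key : ∀ a b : ℂ × ℝ, dK a b = Real.sqrt (‖AK (TH (-p₁.1, -p₁.2) a) (TH (-p₁.1, -p₁.2) b)‖) := by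
    intro a b
    rw [dK_eq, AK_translate]
  have hg1 : TH (-p₁.1, -p₁.2) p₁ = ((0:ℂ),(0:ℝ)) := by
    unfold TH
    refine Prod.ext (by simp) ?_
    simp [Complex.mul_conj]
  rw [key p₂ p₃, key p₁ p₄, key p₂ p₄, key p₁ p₃, key p₁ p₂, key p₃ p₄, hg1]
  exact ptolemy_origin (TH (-p₁.1, -p₁.2) p₂) (TH (-p₁.1, -p₁.2) p₃) (TH (-p₁.1, -p₁.2) p₄)
end
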